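/- ((1+H)-law) Fix H ∈ (0,1). Let g : (0,∞)⁴ → (0,∞) be a function of (σ̂², P, V, C) satisfying for all positive arguments and all λ > 0: (shares scaling) g(σ̂², λP, V/λ, C) = g(σ̂², P, V, C); (money scaling) g(σ̂², λP, V, λC) = g(σ̂², P, V, C); (time scaling) g(λ^(2H)·σ̂², P, λV, C) = λ·g(σ̂², P, V, C); (leverage neutrality) g(λ²σ̂², P/λ, V, C) = g(σ̂², P, V, C). Then there exists a constant c > 0 such that g(σ̂², P, V, C) = c · (σ̂²)^(1/(2(1+H))) · (PV/C)^(1/(1+H)) for all positive arguments; equivalently, N = g(σ̂², P, V, C) satisfies N^(1+H) = c^(1+H) · √(σ̂²) · P · V / C. -/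

import Mathlib

/-- The (1+H)-law: under the H-Assumption `[σ̂²] = T^(−2H)`, dimensional
invariance and leverage neutrality, the number of trades satisfies
`g(σ̂², P, V, C) = c · (σ̂²)^(1/(2(1+H))) · (PV/C)^(1/(1+H))`; equivalently
`N^(1+H) = c^(1+H) · √(σ̂²) · P · V / C`. -/
theorem one_plus_H_law
    (H : ℝ) (hH : H ∈ Set.Ioo (0 : ℝ) 1)
    (g : ℝ → ℝ → ℝ → ℝ → ℝ)
    (hpos : ∀ s P V C : ℝ, 0 < s → 0 < P → 0 < V → 0 < C → 0 < g s P V C)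
    (hshares : ∀ s P V C lam : ℝ, 0 < s → 0 < P → 0 < V → 0 < C → 0 < lam →
      g s (lam * P) (V / lam) C = g s P V C)
    (hmoney : ∀ s P V C lam : ℝ, 0 < s → 0 < P → 0 < V → 0 < C → 0 < lam →
      g s (lam * P) V (lam * C) = g s P V C)
    (htime : ∀ s P V C lam : ℝ, 0 < s → 0 < P → 0 < V → 0 < C → 0 < lam →
      g (lam ^ (2 * H) * s) P (lam * V) C = lam * g s P V C)
    (hleverage : ∀ s P V C lam : ℝ, 0 < s → 0 < P → 0 < V → 0 < C → 0 < lam →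
      g (lam ^ 2 * s) (P / lam) V C = g s P V C) :
    ∃ c : ℝ, 0 < c ∧ ∀ s P V C : ℝ, 0 < s → 0 < P → 0 < V → 0 < C →
      g s P V C = c * s ^ (1 / (2 * (1 + H))) * (P * V / C) ^ (1 / (1 + H))
      ∧ (g s P V C) ^ (1 + H) = c ^ (1 + H) * Real.sqrt s * P * V / C := by

  obtain ⟨hH0, hH1⟩ := hH
  have h1H : (0:ℝ) < 1 + H := by linarith
  have h22H : (0:ℝ) < 2 + 2 * H := by linarith
  set c := g 1 1 1 1 with hc
  have hcpos : 0 < c := hpos 1 1 1 1 one_pos one_pos one_pos one_pos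
  -- key scaling lemma
  have key : ∀ lam : ℝ, 0 < lam → g (lam ^ (2 + 2 * H)) 1 1 1 = lam * c := by
    intro lam hlam
    have hl2H : (0:ℝ) < lam ^ (2 * H) := Real.rpow_pos_of_pos hlam _
    have h1 := htime 1 1 1 1 lam one_pos one_pos one_pos one_pos hlam
    simp only [mul_one] at h1
    have h2 := hshares (lam ^ (2 * H)) 1 lam 1 lam hl2H one_pos hlam one_pos hlam
    rw [mul_one, div_self hlam.ne'] at h2
    have h3 := hleverage (lam ^ (2 * H)) lam 1 1 lam hl2H hlam one_pos one_pos hlam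
    rw [div_self hlam.ne'] at h3
    have hexp : lam ^ 2 * lam ^ (2 * H) = lam ^ (2 + 2 * H) := by
      rw [Real.rpow_add hlam]
      congr 1
      rw [← Real.rpow_natCast lam 2]
      norm_num
    rw [← hexp, h3, h2, h1]
  -- reduce to g t 1 1 1
  have reduce : ∀ s P V C : ℝ, 0 < s → 0 < P → 0 < V → 0 < C →
      g s P V C = g ((P * V / C) ^ 2 * s) 1 1 1 := by
    intro s P V C hs hP hV hC
    have hQ : (0:ℝ) < P * V / C := by positivity
    have m := hmoney s P V C (1 / C) hs hP hV hC (by positivity)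
    rw [one_div, inv_mul_cancel₀ hC.ne'] at m
    have sh := hshares s (C⁻¹ * P) V 1 V hs (by positivity) hV one_pos hV
    rw [div_self hV.ne'] at sh
    have lev := hleverage s (V * (C⁻¹ * P)) 1 1 (P * V / C) hs (by positivity)
      one_pos one_pos hQ
    have hQeq : V * (C⁻¹ * P) = P * V / C := by ring
    rw [hQeq, div_self hQ.ne'] at lev
    rw [hQeq] at sh
    rw [← m, ← sh, ← lev]
  refine ⟨c, hcpos, fun s P V C hs hP hV hC => ?_⟩
  have hQ : (0:ℝ) < P * V / C := by positivity
  have ht : (0:ℝ) < (P * V / C) ^ 2 * s := by positivity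
  set t := (P * V / C) ^ 2 * s with htdef
  have hlam : (0:ℝ) < t ^ (1 / (2 + 2 * H)) := Real.rpow_pos_of_pos ht _
  have hlamexp : (t ^ (1 / (2 + 2 * H))) ^ (2 + 2 * H) = t := by
    rw [← Real.rpow_mul ht.le, one_div_mul_cancel h22H.ne', Real.rpow_one]
  have hval : g s P V C = t ^ (1 / (2 + 2 * H)) * c := by
    have k := key _ hlam
    rw [hlamexp] at k
    rw [reduce s P V C hs hP hV hC, ← htdef, k]
  have hmain : g s P V C =
      c * s ^ (1 / (2 * (1 + H))) * (P * V / C) ^ (1 / (1 + H)) := by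
    rw [hval, htdef]
    rw [Real.mul_rpow (by positivity) hs.le]
    rw [← Real.rpow_natCast (P * V / C) 2, ← Real.rpow_mul hQ.le]
    have e1 : ((2:ℕ) : ℝ) * (1 / (2 + 2 * H)) = 1 / (1 + H) := by
      field_simp; ring
    have e2 : (1 : ℝ) / (2 + 2 * H) = 1 / (2 * (1 + H)) := by ring_nf
    rw [e1, e2]; ring
  refine ⟨hmain, ?_⟩
  rw [hmain]
  rw [Real.mul_rpow (by positivity) (by positivity),
      Real.mul_rpow hcpos.le (by positivity),
      ← Real.rpow_mul hs.le, ← Real.rpow_mul hQ.le]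
  have e3 : (1 : ℝ) / (2 * (1 + H)) * (1 + H) = 1 / 2 := by
    field_simp
  have e4 : (1 : ℝ) / (1 + H) * (1 + H) = 1 := by
    field_simp
  rw [e3, e4, Real.rpow_one, ← Real.sqrt_eq_rpow]
  ring
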